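/- Let h : [0,1] → ℝ be measurable with 0 ≤ h ≤ A and ‖h‖_{L¹(0,1)} ≥ K > 0. Define μ₁(h) = inf over u ∈ H¹(0,1) with ∫₀¹ u·h = 0, u ≠ 0 of (∫₀¹ (u')²h)/(∫₀¹ u²h). Then taking the test function φ(x) = x - (∫₀¹ t·h(t)dt)/(∫₀¹ h(t)dt) yields the explicit bound μ₁(h) ≤ (∫₀¹ h)³ / ∫₀¹ (x·∫₀¹ h(t)dt - ∫₀¹ t·h(t)dt)²·h(x)dx, and in particular μ₁(h) ≤ C(K,A) for some constant depending only on K and A. -/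

import Mathlib

open MeasureTheory

lemma ii_of_bound (f : ℝ → ℝ) (hf : Measurable f) (B : ℝ)
    (hB : ∀ x ∈ Set.Icc (0:ℝ) 1, |f x| ≤ B) :
    IntervalIntegrable f volume 0 1 := by
  rw [intervalIntegrable_iff_integrableOn_Ioc_of_le (by norm_num)]
  apply MeasureTheory.Integrable.mono' (MeasureTheory.integrable_const B)
    hf.aestronglyMeasurable.restrict
  filter_upwards [MeasureTheory.ae_restrict_mem measurableSet_Ioc] with x hx
  exact hB x (Set.Ioc_subset_Icc_self hx)


/-- The Rayleigh quotient with weight `h` of a function `u` on `(0,1)`. -/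
noncomputable def rayleigh (h u : ℝ → ℝ) : ℝ :=
  (∫ x in (0:ℝ)..1, (deriv u x) ^ 2 * h x) / (∫ x in (0:ℝ)..1, (u x) ^ 2 * h x)

/-- The relaxed first Sturm–Liouville eigenvalue with weight `h`:
infimum of Rayleigh quotients over (smooth representatives of) functions
orthogonal to `h` in `L²(0,1)`. -/
noncomputable def mu1 (h : ℝ → ℝ) : ℝ :=
  sInf {r | ∃ u : ℝ → ℝ, ContDiffOn ℝ 1 u (Set.Icc 0 1) ∧
    (∫ x in (0:ℝ)..1, u x * h x) = 0 ∧
    (∫ x in (0:ℝ)..1, (u x) ^ 2 * h x) ≠ 0 ∧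
    r = rayleigh h u}

theorem stmt16 (K A : ℝ) (hK : 0 < K) (hKA : K ≤ A) :
    ∃ C : ℝ, ∀ h : ℝ → ℝ, Measurable h →
      (∀ x ∈ Set.Icc (0:ℝ) 1, 0 ≤ h x ∧ h x ≤ A) →
      K ≤ (∫ x in (0:ℝ)..1, h x) →
      mu1 h ≤ (∫ x in (0:ℝ)..1, h x) ^ 3 /
          (∫ x in (0:ℝ)..1,
            (x * (∫ t in (0:ℝ)..1, h t) - ∫ t in (0:ℝ)..1, t * h t) ^ 2 * h x) ∧
      mu1 h ≤ C := by
  have hA : (0:ℝ) < A := lt_of_lt_of_le hK hKA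
  set ε : ℝ := K / (4 * A) with hε
  have hεpos : 0 < ε := by positivity
  refine ⟨2 / ε ^ 2, ?_⟩
  intro h hmeas hbd hKM
  set M : ℝ := ∫ x in (0:ℝ)..1, h x with hM
  set T : ℝ := ∫ t in (0:ℝ)..1, t * h t with hT
  have hMpos : 0 < M := lt_of_lt_of_le hK hKM
  set c : ℝ := T / M with hc
  set φ : ℝ → ℝ := fun x => x * M - T with hφ
  set D : ℝ := ∫ x in (0:ℝ)..1, (x * M - T) ^ 2 * h x with hD
  -- basic integrability
  have habs : ∀ x ∈ Set.Icc (0:ℝ) 1, |h x| ≤ A := by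
    intro x hx; rw [abs_le]; constructor
    · linarith [(hbd x hx).1]
    · exact (hbd x hx).2
  have hih : IntervalIntegrable h volume 0 1 := ii_of_bound h hmeas A habs
  have hixh : IntervalIntegrable (fun x => x * h x) volume 0 1 := by
    apply ii_of_bound _ (measurable_id.mul hmeas) A
    intro x hx
    rw [show ((id : ℝ → ℝ) * h) x = x * h x from rfl, abs_mul]
    calc |x| * |h x| ≤ 1 * A := by
          apply mul_le_mul _ (habs x hx) (abs_nonneg _) zero_le_one
          rw [abs_le]; exact ⟨by linarith [hx.1], hx.2⟩
      _ = A := one_mul A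
  have hiφ2h : IntervalIntegrable (fun x => (x * M - T) ^ 2 * h x) volume 0 1 := by
    apply ii_of_bound _ (((measurable_id.mul_const M).sub_const T).pow_const 2 |>.mul hmeas)
      ((1 * |M| + |T|) ^ 2 * A)
    intro x hx
    rw [Pi.mul_apply, abs_mul]
    apply mul_le_mul _ (habs x hx) (abs_nonneg _) (by positivity)
    simp only [id]
    rw [abs_pow]
    apply pow_le_pow_left₀ (abs_nonneg _)
    calc |x * M - T| ≤ |x * M| + |T| := abs_sub _ _
      _ = |x| * |M| + |T| := by rw [abs_mul]
      _ ≤ 1 * |M| + |T| := by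
          have hx1 : |x| ≤ 1 := by rw [abs_le]; exact ⟨by linarith [hx.1], hx.2⟩
          nlinarith [abs_nonneg M]
  -- indicator function
  set g : ℝ → ℝ := (Set.Icc (c - ε) (c + ε)).indicator (fun _ => (1:ℝ)) with hg
  have hgmeas : Measurable g := (measurable_const).indicator measurableSet_Icc
  have hgbd : ∀ x, 0 ≤ g x ∧ g x ≤ 1 := by
    intro x
    by_cases hx : x ∈ Set.Icc (c - ε) (c + ε) <;> simp [hg, Set.indicator, hx]
  have hig : IntervalIntegrable g volume 0 1 := by
    apply ii_of_bound _ hgmeas 1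
    intro x _
    rw [abs_le]; exact ⟨by linarith [(hgbd x).1], (hgbd x).2⟩
  have hgint : (∫ x in (0:ℝ)..1, g x) ≤ 2 * ε := by
    have h1 : (∫ x in (0:ℝ)..1, g x) = ∫ x in Set.Ioc (0:ℝ) 1, g x := by
      rw [intervalIntegral.integral_of_le (by norm_num)]
    have h2 : (∫ x in Set.Ioc (0:ℝ) 1, g x) ≤ ∫ x, g x := by
      apply MeasureTheory.setIntegral_le_integral
      · rw [MeasureTheory.integrable_indicator_iff measurableSet_Icc]
        exact integrableOn_const (by rw [Real.volume_Icc]; exact ENNReal.ofReal_ne_top)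
      · filter_upwards with x; exact (hgbd x).1
    have h3 : (∫ x, g x) = 2 * ε := by
      rw [hg, MeasureTheory.integral_indicator_const _ measurableSet_Icc]
      rw [Real.volume_real_Icc]
      have : c + ε - (c - ε) = 2 * ε := by ring
      rw [this, max_eq_left (by positivity)]
      simp
    rw [h1]; linarith
  -- lower bound for D
  have hptwise : ∀ x ∈ Set.Icc (0:ℝ) 1,
      M ^ 2 * ε ^ 2 * h x - M ^ 2 * ε ^ 2 * A * g x ≤ (x * M - T) ^ 2 * h x := by
    intro x hx
    by_cases hxs : x ∈ Set.Icc (c - ε) (c + ε)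
    · have : g x = 1 := by simp [hg, Set.indicator, hxs]
      rw [this]
      have h1 := (hbd x hx).1
      have h2 := (hbd x hx).2
      nlinarith [sq_nonneg (x * M - T), sq_nonneg (M * ε)]
    · have : g x = 0 := by simp [hg, Set.indicator, hxs]
      rw [this]
      have hMT : x * M - T = M * (x - c) := by
        rw [hc]; field_simp
      have habs2 : ε ≤ |x - c| := by
        rcases lt_or_ge x (c - ε) with h1 | h1
        · rw [abs_of_nonpos (by linarith)]; linarith
        · have h2 : c + ε < x := by
            by_contra h2
            exact hxs ⟨h1, le_of_not_gt h2⟩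
          rw [abs_of_nonneg (by linarith)]; linarith
      have hsq : ε ^ 2 ≤ (x - c) ^ 2 := by
        calc ε ^ 2 ≤ |x - c| ^ 2 := by
              apply pow_le_pow_left₀ (le_of_lt hεpos) habs2
          _ = (x - c) ^ 2 := sq_abs _
      have h1 := (hbd x hx).1
      rw [hMT]
      have key := mul_le_mul_of_nonneg_right
        (mul_le_mul_of_nonneg_left hsq (sq_nonneg M)) h1
      nlinarith [key]
  have hiLHS : IntervalIntegrable
      (fun x => M ^ 2 * ε ^ 2 * h x - M ^ 2 * ε ^ 2 * A * g x) volume 0 1 :=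
    ((hih.const_mul _).sub (hig.const_mul _))
  have hDlb : M ^ 2 * ε ^ 2 * (M / 2) ≤ D := by
    have hmono := intervalIntegral.integral_mono_on (by norm_num) hiLHS hiφ2h hptwise
    have heq : (∫ x in (0:ℝ)..1, (M ^ 2 * ε ^ 2 * h x - M ^ 2 * ε ^ 2 * A * g x)) =
        M ^ 2 * ε ^ 2 * M - M ^ 2 * ε ^ 2 * A * (∫ x in (0:ℝ)..1, g x) := by
      rw [intervalIntegral.integral_sub (hih.const_mul _) (hig.const_mul _),
        intervalIntegral.integral_const_mul, intervalIntegral.integral_const_mul]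
    have hεA : 2 * ε * A = K / 2 := by rw [hε]; field_simp; ring
    have hkey : M ^ 2 * ε ^ 2 * (M / 2) ≤
        M ^ 2 * ε ^ 2 * M - M ^ 2 * ε ^ 2 * A * (∫ x in (0:ℝ)..1, g x) := by
      have h2 : M ^ 2 * ε ^ 2 * A * (∫ x in (0:ℝ)..1, g x) ≤ M ^ 2 * ε ^ 2 * A * (2 * ε) := by
        apply mul_le_mul_of_nonneg_left hgint (by positivity)
      have h3 : M ^ 2 * ε ^ 2 * A * (2 * ε) = M ^ 2 * ε ^ 2 * (K / 2) := by
        rw [← hεA]; ring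
      nlinarith [sq_nonneg (M * ε), hKM]
    calc M ^ 2 * ε ^ 2 * (M / 2) ≤ _ := hkey
      _ ≤ D := by rw [← heq]; exact hmono
  have hDpos : 0 < D := lt_of_lt_of_le (by positivity) hDlb
  -- rayleigh of φ
  have hderivφ : ∀ x, deriv φ x = M := by intro x; simp [hφ]
  have hray : rayleigh h φ = M ^ 3 / D := by
    rw [rayleigh]
    congr 1
    have : (fun x => (deriv φ x) ^ 2 * h x) = fun x => M ^ 2 * h x := by
      funext x; rw [hderivφ]
    rw [this, intervalIntegral.integral_const_mul]
    rw [← hM]; ring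
  -- orthogonality
  have horth : (∫ x in (0:ℝ)..1, φ x * h x) = 0 := by
    have : (fun x => φ x * h x) = fun x => M * (x * h x) - T * h x := by
      funext x; rw [hφ]; ring
    rw [this, intervalIntegral.integral_sub (hixh.const_mul _) (hih.const_mul _),
      intervalIntegral.integral_const_mul, intervalIntegral.integral_const_mul,
      ← hM, ← hT]
    ring
  -- mu1 ≤ rayleigh
  have hmem : rayleigh h φ ∈ {r | ∃ u : ℝ → ℝ, ContDiffOn ℝ 1 u (Set.Icc 0 1) ∧
      (∫ x in (0:ℝ)..1, u x * h x) = 0 ∧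
      (∫ x in (0:ℝ)..1, (u x) ^ 2 * h x) ≠ 0 ∧
      r = rayleigh h u} := by
    refine ⟨φ, ?_, horth, ?_, rfl⟩
    · exact ((contDiff_id.mul contDiff_const).sub contDiff_const).contDiffOn
    · rw [hφ]
      exact ne_of_gt hDpos
  have hbdd : BddBelow {r | ∃ u : ℝ → ℝ, ContDiffOn ℝ 1 u (Set.Icc 0 1) ∧
      (∫ x in (0:ℝ)..1, u x * h x) = 0 ∧
      (∫ x in (0:ℝ)..1, (u x) ^ 2 * h x) ≠ 0 ∧
      r = rayleigh h u} := by
    refine ⟨0, ?_⟩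
    rintro r ⟨u, _, _, hden, rfl⟩
    apply div_nonneg
    · apply intervalIntegral.integral_nonneg (by norm_num)
      intro x hx
      exact mul_nonneg (sq_nonneg _) (hbd x hx).1
    · apply intervalIntegral.integral_nonneg (by norm_num)
      intro x hx
      exact mul_nonneg (sq_nonneg _) (hbd x hx).1
  have hmu : mu1 h ≤ M ^ 3 / D := by
    rw [mu1, ← hray]
    exact csInf_le hbdd hmem
  constructor
  · exact hmu
  · apply le_trans hmu
    rw [div_le_div_iff₀ hDpos (by positivity : (0:ℝ) < ε ^ 2)]
    nlinarith [hDlb, pow_pos hMpos 3, sq_nonneg ε]
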